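/- arXiv:2501.07379 — 2 statements merged into one kernel-verified Lean document; each statement's English description precedes it below -/
import Mathlib

section
/- Let ε > 0, k ≥ 1 an integer, Γ_ε as above, and q a probability density on ℝ with all moments finite, mean M₁, and central moments Mⱼᶜ = ∫ (x − M₁)ʲ q(x) dx. Then ∫ (x − M₁)^{2k} T̃_ε[q](x) dx = (2/4ᵏ) M₂ₖᶜ + Σ_{l=0}^{k−1} Σ_{j=0}^{2l} σ_{k−l} ε^{2(k−l)} (1/4ˡ) C(2k,2l) C(2l,j) M_{2l−j}ᶜ Mⱼᶜ + Σ_{j=2}^{2k−2} (1/4ᵏ) C(2k,j) M_{2k−j}ᶜ Mⱼᶜ, where σ_m ε^{2m} denotes the 2m-th moment of Γ_ε (so σ_m = (2m)!/(m! 4^m) · 2^{−m} up to the variance normalization Var(Γ_ε) = ε²/2). -/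
open MeasureTheory Real Finset

noncomputable def Gam (ε x : ℝ) : ℝ := (1 / (ε * Real.sqrt Real.pi)) * Real.exp (-(x ^ 2) / ε ^ 2)

noncomputable def Ttil (ε : ℝ) (q : ℝ → ℝ) (x : ℝ) : ℝ :=
  ∫ y, ∫ y', Gam ε (x - (y + y') / 2) * q y * q y'

lemma gam_cont (ε : ℝ) : Continuous (Gam ε) := by
  unfold Gam; fun_prop

lemma gam_nonneg {ε : ℝ} (hε : 0 < ε) (x : ℝ) : 0 ≤ Gam ε x := by
  unfold Gam
  have := Real.sqrt_pos.2 Real.pi_pos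
  positivity

lemma gam_le {ε : ℝ} (hε : 0 < ε) (x : ℝ) : Gam ε x ≤ 1 / (ε * Real.sqrt Real.pi) := by
  unfold Gam
  have h1 : Real.exp (-(x ^ 2) / ε ^ 2) ≤ 1 := by
    rw [Real.exp_le_one_iff]
    have : (0:ℝ) ≤ x ^ 2 / ε ^ 2 := by positivity
    rw [neg_div]; linarith
  have h2 : (0:ℝ) < 1 / (ε * Real.sqrt Real.pi) := by
    have := Real.sqrt_pos.2 Real.pi_pos; positivity
  nlinarith

lemma gam_rewrite {ε : ℝ} (hε : 0 < ε) (x : ℝ) :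
    Gam ε x = (1 / (ε * Real.sqrt Real.pi)) * Real.exp (-(1/ε^2) * x ^ 2) := by
  unfold Gam; ring_nf

lemma pow_exp_int {b : ℝ} (hb : 0 < b) (n : ℕ) :
    Integrable (fun x : ℝ => x ^ n * Real.exp (-b * x ^ 2)) := by
  have h := integrable_rpow_mul_exp_neg_mul_sq hb (s := (n:ℝ)) (by exact_mod_cast neg_one_lt_zero.trans_le (Nat.cast_nonneg n))
  simpa [Real.rpow_natCast] using h

lemma gam_int_pow {ε : ℝ} (hε : 0 < ε) (n : ℕ) :
    Integrable (fun x : ℝ => x ^ n * Gam ε x) := by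
  have hb : (0:ℝ) < 1/ε^2 := by positivity
  have h := (pow_exp_int hb n).const_mul (1 / (ε * Real.sqrt Real.pi))
  refine h.congr ?_
  filter_upwards with x
  rw [gam_rewrite hε]; ring

lemma gam_int {ε : ℝ} (hε : 0 < ε) : Integrable (Gam ε) := by
  have := gam_int_pow hε 0
  simpa using this

lemma gam_odd {ε : ℝ} (hε : 0 < ε) (m : ℕ) :
    (∫ x : ℝ, x ^ (2*m+1) * Gam ε x) = 0 := by
  have hneg : (∫ x : ℝ, (-x) ^ (2*m+1) * Gam ε (-x)) = ∫ x : ℝ, x ^ (2*m+1) * Gam ε x := by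
    exact MeasureTheory.integral_neg_eq_self (fun x => x ^ (2*m+1) * Gam ε x) volume
  have heq : ∀ x : ℝ, (-x) ^ (2*m+1) * Gam ε (-x) = -(x ^ (2*m+1) * Gam ε x) := by
    intro x
    have : Gam ε (-x) = Gam ε x := by unfold Gam; rw [neg_pow]; ring_nf
    rw [this, Odd.neg_pow ⟨m, by ring⟩]; ring
  simp only [heq, integral_neg] at hneg
  linarith

lemma gam_total {ε : ℝ} (hε : 0 < ε) : (∫ x : ℝ, Gam ε x) = 1 := by
  have hb : (0:ℝ) < 1/ε^2 := by positivity
  have : (∫ x : ℝ, Gam ε x) = (1 / (ε * Real.sqrt Real.pi)) * ∫ x : ℝ, Real.exp (-(1/ε^2) * x ^ 2) := by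
    rw [← MeasureTheory.integral_const_mul]
    congr 1; funext x; rw [gam_rewrite hε]
  rw [this, integral_gaussian]
  have hπ : (0:ℝ) < Real.sqrt Real.pi := Real.sqrt_pos.2 Real.pi_pos
  rw [div_div_eq_mul_div, div_one, Real.sqrt_mul Real.pi_pos.le, Real.sqrt_sq hε.le]
  field_simp

/-- `σ_m` defined so that the `2m`-th moment of `Γ_ε` equals `σ_m ε^{2m}`:
it is the `2m`-th moment of `Γ_1`. -/
noncomputable def sigGam (m : ℕ) : ℝ := ∫ x, x ^ (2 * m) * Gam 1 x

lemma sigGam_zero : sigGam 0 = 1 := by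
  unfold sigGam
  simpa using gam_total one_pos

lemma base_int {ε : ℝ} (hε : 0 < ε) (d : ℝ) (N : ℕ) :
    Integrable (fun u : ℝ => (u + d) ^ N * Gam ε u) := by
  have h : (fun u : ℝ => (u + d) ^ N * Gam ε u)
      = fun u => ∑ i ∈ Finset.range (N+1), (d ^ (N - i) * (Nat.choose N i : ℝ)) * (u ^ i * Gam ε u) := by
    funext u; rw [add_pow, Finset.sum_mul]; exact Finset.sum_congr rfl fun i _ => by ring
  rw [h]
  exact integrable_finset_sum _ (fun i _ => (gam_int_pow hε i).const_mul _)

lemma shift_int {ε : ℝ} (hε : 0 < ε) (M₁ : ℝ) (n : ℕ) (c : ℝ) :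
    Integrable (fun x : ℝ => (x - M₁) ^ n * Gam ε (x - c)) := by
  have h := (base_int hε (c - M₁) n).comp_sub_right c
  refine h.congr (Filter.Eventually.of_forall fun x => ?_)
  have hx : x - c + (c - M₁) = x - M₁ := by ring
  simp only [hx]

lemma Jval {ε : ℝ} (hε : 0 < ε) (sig : ℕ → ℝ)
    (hsig : ∀ m : ℕ, (∫ x, x ^ (2 * m) * Gam ε x) = sig m * ε ^ (2 * m))
    (M₁ c : ℝ) (n : ℕ) :
    (∫ x, (x - M₁) ^ (2*n) * Gam ε (x - c))
      = ∑ m ∈ Finset.range (n+1),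
          (Nat.choose (2*n) (2*m) : ℝ) * (sig m * ε ^ (2*m)) * (c - M₁) ^ (2*n - 2*m) := by
  have h1 : (∫ x, (x - M₁) ^ (2*n) * Gam ε (x - c))
      = ∫ u, (u + (c - M₁)) ^ (2*n) * Gam ε u := by
    rw [← MeasureTheory.integral_sub_right_eq_self (fun u => (u + (c - M₁)) ^ (2*n) * Gam ε u) c]
    congr 1; funext x
    have hx : x - c + (c - M₁) = x - M₁ := by ring
    simp only [hx]
  rw [h1]
  have h2 : (fun u : ℝ => (u + (c - M₁)) ^ (2*n) * Gam ε u)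
      = fun u => ∑ i ∈ Finset.range (2*n+1),
          ((c - M₁) ^ (2*n - i) * (Nat.choose (2*n) i : ℝ)) * (u ^ i * Gam ε u) := by
    funext u; rw [add_pow, Finset.sum_mul]; exact Finset.sum_congr rfl fun i _ => by ring
  rw [h2, integral_finset_sum _ (fun i _ => (gam_int_pow hε i).const_mul _)]
  have h3 : ∀ i ∈ Finset.range (2*n+1),
      (∫ u, ((c - M₁) ^ (2*n - i) * (Nat.choose (2*n) i : ℝ)) * (u ^ i * Gam ε u))
        = ((c - M₁) ^ (2*n - i) * (Nat.choose (2*n) i : ℝ)) * ∫ u, u ^ i * Gam ε u :=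
    fun i _ => MeasureTheory.integral_const_mul _ _
  rw [Finset.sum_congr rfl h3]
  have himg : (Finset.range (n+1)).image (fun m => 2*m) ⊆ Finset.range (2*n+1) := by
    intro x hx
    simp only [Finset.mem_image, Finset.mem_range] at hx ⊢
    obtain ⟨m, hm, rfl⟩ := hx; omega
  rw [← Finset.sum_subset himg ?vanish]
  · rw [Finset.sum_image (fun a _ b _ h => by omega)]
    refine Finset.sum_congr rfl fun m hm => ?_
    rw [hsig m]; ring
  · intro i hi hni
    rcases Nat.even_or_odd i with ⟨m, rfl⟩ | ⟨m, rfl⟩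
    · refine absurd (Finset.mem_image.2 ⟨m, Finset.mem_range.2 ?_, by omega⟩) hni
      simp only [Finset.mem_range] at hi; omega
    · rw [gam_odd hε m, mul_zero]

lemma qmoment_int {q : ℝ → ℝ} (hq_nonneg : ∀ x, 0 ≤ q x) (hq_int : Integrable q)
    (hmom : ∀ n : ℕ, Integrable (fun x => |x| ^ n * q x)) (M₁ : ℝ) (n : ℕ) :
    Integrable (fun y : ℝ => (y - M₁) ^ n * q y) := by
  have hg : Integrable (fun y : ℝ => ∑ i ∈ Finset.range (n+1),
      ((Nat.choose n i : ℝ) * |M₁| ^ (n - i)) * (|y| ^ i * q y)) :=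
    integrable_finset_sum _ (fun i _ => (hmom i).const_mul _)
  refine hg.mono' ?_ (Filter.Eventually.of_forall fun y => ?_)
  · exact (Continuous.aestronglyMeasurable (by fun_prop)).mul hq_int.1
  · rw [Real.norm_eq_abs, abs_mul, abs_pow, abs_of_nonneg (hq_nonneg y)]
    have h1 : |y - M₁| ^ n ≤ (|y| + |M₁|) ^ n :=
      pow_le_pow_left₀ (abs_nonneg _) (abs_sub _ _) n
    have h2 : (|y| + |M₁|) ^ n * q y = ∑ i ∈ Finset.range (n+1),
        ((Nat.choose n i : ℝ) * |M₁| ^ (n - i)) * (|y| ^ i * q y) := by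
      rw [add_pow, Finset.sum_mul]; exact Finset.sum_congr rfl fun i _ => by ring
    rw [← h2]
    exact mul_le_mul_of_nonneg_right h1 (hq_nonneg y)

lemma prod_pow_int {q : ℝ → ℝ} (hq_nonneg : ∀ x, 0 ≤ q x) (hq_int : Integrable q)
    (hmom : ∀ n : ℕ, Integrable (fun x => |x| ^ n * q x)) (M₁ : ℝ) (l : ℕ) :
    Integrable (fun p : ℝ × ℝ => ((p.1 + p.2) / 2 - M₁) ^ l * (q p.1 * q p.2))
      (volume.prod volume) := by
  have hfun : (fun p : ℝ × ℝ => ((p.1 + p.2) / 2 - M₁) ^ l * (q p.1 * q p.2))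
      = fun p => ∑ j ∈ Finset.range (l+1),
          ((Nat.choose l j : ℝ) / 2 ^ l) *
            (((p.1 - M₁) ^ j * q p.1) * ((p.2 - M₁) ^ (l - j) * q p.2)) := by
    funext p
    have h0 : (p.1 + p.2) / 2 - M₁ = ((p.1 - M₁) + (p.2 - M₁)) / 2 := by ring
    rw [h0, div_pow, add_pow, Finset.sum_div, Finset.sum_mul]
    exact Finset.sum_congr rfl fun j _ => by ring
  rw [hfun]
  refine integrable_finset_sum _ (fun j _ => Integrable.const_mul ?_ _)
  exact (qmoment_int hq_nonneg hq_int hmom M₁ j).mul_prod (qmoment_int hq_nonneg hq_int hmom M₁ (l - j))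

lemma prod_pow_val {q : ℝ → ℝ} (hq_nonneg : ∀ x, 0 ≤ q x) (hq_int : Integrable q)
    (hmom : ∀ n : ℕ, Integrable (fun x => |x| ^ n * q x)) (M₁ : ℝ)
    (Mc : ℕ → ℝ) (hMc : ∀ j : ℕ, Mc j = ∫ x, (x - M₁) ^ j * q x) (l : ℕ) :
    (∫ p : ℝ × ℝ, ((p.1 + p.2) / 2 - M₁) ^ l * (q p.1 * q p.2) ∂(volume.prod volume))
      = ∑ j ∈ Finset.range (l+1), ((Nat.choose l j : ℝ) / 2 ^ l) * (Mc j * Mc (l - j)) := by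
  have hfun : (fun p : ℝ × ℝ => ((p.1 + p.2) / 2 - M₁) ^ l * (q p.1 * q p.2))
      = fun p => ∑ j ∈ Finset.range (l+1),
          ((Nat.choose l j : ℝ) / 2 ^ l) *
            (((p.1 - M₁) ^ j * q p.1) * ((p.2 - M₁) ^ (l - j) * q p.2)) := by
    funext p
    have h0 : (p.1 + p.2) / 2 - M₁ = ((p.1 - M₁) + (p.2 - M₁)) / 2 := by ring
    rw [h0, div_pow, add_pow, Finset.sum_div, Finset.sum_mul]
    exact Finset.sum_congr rfl fun j _ => by ring
  rw [hfun, integral_finset_sum _ (fun j _ => Integrable.const_mul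
    ((qmoment_int hq_nonneg hq_int hmom M₁ j).mul_prod (qmoment_int hq_nonneg hq_int hmom M₁ (l - j))) _)]
  refine Finset.sum_congr rfl fun j _ => ?_
  rw [MeasureTheory.integral_const_mul,
    MeasureTheory.integral_prod_mul (fun y => (y - M₁) ^ j * q y) (fun y => (y - M₁) ^ (l - j) * q y),
    ← hMc j, ← hMc (l - j)]
theorem stmt2 (ε : ℝ) (hε : 0 < ε) (k : ℕ) (hk : 1 ≤ k) (q : ℝ → ℝ)
    (hq_nonneg : ∀ x, 0 ≤ q x)
    (hq_int : Integrable q)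
    (hq_prob : ∫ x, q x = 1)
    (hmom : ∀ n : ℕ, Integrable (fun x => |x| ^ n * q x))
    (M₁ : ℝ) (hM₁ : M₁ = ∫ x, x * q x)
    (Mc : ℕ → ℝ) (hMc : ∀ j : ℕ, Mc j = ∫ x, (x - M₁) ^ j * q x)
    (hsig : ∀ m : ℕ, (∫ x, x ^ (2 * m) * Gam ε x) = sigGam m * ε ^ (2 * m)) :
    (∫ x, (x - M₁) ^ (2 * k) * Ttil ε q x)
      = (2 / 4 ^ k) * Mc (2 * k)
        + ∑ l ∈ Finset.range k, ∑ j ∈ Finset.range (2 * l + 1),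
            sigGam (k - l) * ε ^ (2 * (k - l)) * (1 / 4 ^ l) *
              (Nat.choose (2 * k) (2 * l) : ℝ) * (Nat.choose (2 * l) j : ℝ) *
              Mc (2 * l - j) * Mc j
        + ∑ j ∈ Finset.Icc 2 (2 * k - 2),
            (1 / 4 ^ k) * (Nat.choose (2 * k) j : ℝ) * Mc (2 * k - j) * Mc j := by
  -- Step 1: Ttil as a product-measure integral
  have hTt : ∀ x : ℝ, Ttil ε q x
      = ∫ p : ℝ × ℝ, Gam ε (x - (p.1 + p.2) / 2) * (q p.1 * q p.2) ∂(volume.prod volume) := by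
    intro x
    have hb : Integrable (fun p : ℝ × ℝ => Gam ε (x - (p.1 + p.2) / 2) * (q p.1 * q p.2))
        (volume.prod volume) := by
      refine (hq_int.mul_prod hq_int).bdd_mul
        (Continuous.aestronglyMeasurable (by unfold Gam; fun_prop))
        (c := 1 / (ε * Real.sqrt Real.pi)) (Filter.Eventually.of_forall fun p => ?_)
      rw [Real.norm_eq_abs, abs_of_nonneg (gam_nonneg hε _)]
      exact gam_le hε _
    have hint : Integrable
        (Function.uncurry fun y y' => Gam ε (x - (y + y') / 2) * q y * q y')
        (volume.prod volume) :=
      hb.congr (Filter.Eventually.of_forall fun p => by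
        simp only [Function.uncurry]; ring)
    unfold Ttil
    rw [MeasureTheory.integral_integral hint]
    exact integral_congr_ae (Filter.Eventually.of_forall fun p => by ring)
  -- Step 2: pull the polynomial inside
  have hstep2 : (∫ x, (x - M₁) ^ (2 * k) * Ttil ε q x)
      = ∫ x, ∫ p : ℝ × ℝ, (x - M₁) ^ (2 * k) *
          (Gam ε (x - (p.1 + p.2) / 2) * (q p.1 * q p.2)) ∂(volume.prod volume) := by
    refine integral_congr_ae (Filter.Eventually.of_forall fun x => ?_)
    dsimp only
    rw [hTt x, MeasureTheory.integral_const_mul]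
  -- the inner x-integral for fixed p
  have hinner : ∀ p : ℝ × ℝ,
      (∫ x, (x - M₁) ^ (2 * k) * (Gam ε (x - (p.1 + p.2) / 2) * (q p.1 * q p.2)))
        = (∑ m ∈ Finset.range (k + 1),
            (Nat.choose (2 * k) (2 * m) : ℝ) * (sigGam m * ε ^ (2 * m)) *
              ((p.1 + p.2) / 2 - M₁) ^ (2 * k - 2 * m)) * (q p.1 * q p.2) := by
    intro p
    have h1 : (∫ x, (x - M₁) ^ (2 * k) * (Gam ε (x - (p.1 + p.2) / 2) * (q p.1 * q p.2)))
        = (∫ x, (x - M₁) ^ (2 * k) * Gam ε (x - (p.1 + p.2) / 2)) * (q p.1 * q p.2) := by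
      rw [← MeasureTheory.integral_mul_const]
      exact integral_congr_ae (Filter.Eventually.of_forall fun x => by ring)
    rw [h1, Jval hε sigGam hsig M₁ _ k]
  -- joint integrability on (ℝ×ℝ) × ℝ
  have hFmeas : AEStronglyMeasurable
      (fun z : (ℝ × ℝ) × ℝ => (z.2 - M₁) ^ (2 * k) *
        (Gam ε (z.2 - (z.1.1 + z.1.2) / 2) * (q z.1.1 * q z.1.2)))
      ((volume.prod volume).prod volume) := by
    have h1 : AEStronglyMeasurable (fun z : (ℝ × ℝ) × ℝ => q z.1.1)
        ((volume.prod volume).prod volume) :=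
      hq_int.1.comp_quasiMeasurePreserving
        (Measure.quasiMeasurePreserving_fst.comp Measure.quasiMeasurePreserving_fst)
    have h2 : AEStronglyMeasurable (fun z : (ℝ × ℝ) × ℝ => q z.1.2)
        ((volume.prod volume).prod volume) :=
      hq_int.1.comp_quasiMeasurePreserving
        (Measure.quasiMeasurePreserving_snd.comp Measure.quasiMeasurePreserving_fst)
    refine (Continuous.aestronglyMeasurable (by fun_prop)).mul
      ((Continuous.aestronglyMeasurable (by unfold Gam; fun_prop)).mul (h1.mul h2))
  have hFnn : ∀ z : (ℝ × ℝ) × ℝ, 0 ≤ (z.2 - M₁) ^ (2 * k) *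
      (Gam ε (z.2 - (z.1.1 + z.1.2) / 2) * (q z.1.1 * q z.1.2)) := fun z =>
    mul_nonneg (Even.pow_nonneg (even_two_mul k) _)
      (mul_nonneg (gam_nonneg hε _) (mul_nonneg (hq_nonneg _) (hq_nonneg _)))
  have hFint : Integrable
      (fun z : (ℝ × ℝ) × ℝ => (z.2 - M₁) ^ (2 * k) *
        (Gam ε (z.2 - (z.1.1 + z.1.2) / 2) * (q z.1.1 * q z.1.2)))
      ((volume.prod volume).prod volume) := by
    rw [MeasureTheory.integrable_prod_iff hFmeas]
    constructor
    · refine Filter.Eventually.of_forall fun p => ?_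
      refine ((shift_int hε M₁ (2 * k) ((p.1 + p.2) / 2)).mul_const (q p.1 * q p.2)).congr
        (Filter.Eventually.of_forall fun x => by ring)
    · have hg : Integrable (fun p : ℝ × ℝ => ∑ m ∈ Finset.range (k + 1),
          ((Nat.choose (2 * k) (2 * m) : ℝ) * (sigGam m * ε ^ (2 * m))) *
            (((p.1 + p.2) / 2 - M₁) ^ (2 * k - 2 * m) * (q p.1 * q p.2)))
          (volume.prod volume) :=
        integrable_finset_sum _ fun m _ =>
          (prod_pow_int hq_nonneg hq_int hmom M₁ _).const_mul _
      refine hg.congr (Filter.Eventually.of_forall fun p => ?_)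
      dsimp only
      have : (fun x : ℝ => ‖(x - M₁) ^ (2 * k) *
          (Gam ε (x - (p.1 + p.2) / 2) * (q p.1 * q p.2))‖)
          = fun x => (x - M₁) ^ (2 * k) * (Gam ε (x - (p.1 + p.2) / 2) * (q p.1 * q p.2)) := by
        funext x; exact Real.norm_of_nonneg (hFnn (p, x))
      rw [this, hinner p, Finset.sum_mul]
      exact Finset.sum_congr rfl fun m _ => by ring
  -- swap
  have hH : Integrable (Function.uncurry fun (x : ℝ) (p : ℝ × ℝ) =>
      (x - M₁) ^ (2 * k) * (Gam ε (x - (p.1 + p.2) / 2) * (q p.1 * q p.2)))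
      (volume.prod (volume.prod volume)) := hFint.swap
  rw [hstep2, MeasureTheory.integral_integral_swap hH]
  -- compute the p-integral
  have hstep4 : (∫ p : ℝ × ℝ, ∫ x, (x - M₁) ^ (2 * k) *
      (Gam ε (x - (p.1 + p.2) / 2) * (q p.1 * q p.2)) ∂volume ∂(volume.prod volume))
      = ∑ m ∈ Finset.range (k + 1),
          ((Nat.choose (2 * k) (2 * m) : ℝ) * (sigGam m * ε ^ (2 * m))) *
            ∑ j ∈ Finset.range (2 * k - 2 * m + 1),
              ((Nat.choose (2 * k - 2 * m) j : ℝ) / 2 ^ (2 * k - 2 * m)) *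
                (Mc j * Mc (2 * k - 2 * m - j)) := by
    have h5 : (∫ p : ℝ × ℝ, ∫ x, (x - M₁) ^ (2 * k) *
        (Gam ε (x - (p.1 + p.2) / 2) * (q p.1 * q p.2)) ∂volume ∂(volume.prod volume))
        = ∫ p : ℝ × ℝ, ∑ m ∈ Finset.range (k + 1),
            ((Nat.choose (2 * k) (2 * m) : ℝ) * (sigGam m * ε ^ (2 * m))) *
              (((p.1 + p.2) / 2 - M₁) ^ (2 * k - 2 * m) * (q p.1 * q p.2))
            ∂(volume.prod volume) := by
      refine integral_congr_ae (Filter.Eventually.of_forall fun p => ?_)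
      dsimp only
      rw [hinner p, Finset.sum_mul]
      exact Finset.sum_congr rfl fun m _ => by ring
    rw [h5, integral_finset_sum _ (fun m _ =>
      (prod_pow_int hq_nonneg hq_int hmom M₁ _).const_mul _)]
    refine Finset.sum_congr rfl fun m _ => ?_
    rw [MeasureTheory.integral_const_mul,
      prod_pow_val hq_nonneg hq_int hmom M₁ Mc hMc (2 * k - 2 * m)]
  rw [hstep4]
  -- basic moment facts
  have hMc0 : Mc 0 = 1 := by rw [hMc 0]; simpa using hq_prob
  have hxq : Integrable (fun x : ℝ => x * q x) := by
    refine (hmom 1).mono' (continuous_id.aestronglyMeasurable.mul hq_int.1)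
      (Filter.Eventually.of_forall fun x => ?_)
    rw [Real.norm_eq_abs, abs_mul, pow_one, abs_of_nonneg (hq_nonneg x)]
  have hMc1 : Mc 1 = 0 := by
    rw [hMc 1]
    have h : (fun x : ℝ => (x - M₁) ^ 1 * q x) = fun x => x * q x - M₁ * q x := by
      funext x; ring
    rw [h, integral_sub hxq (hq_int.const_mul M₁), MeasureTheory.integral_const_mul, hq_prob,
      ← hM₁]
    ring
  have h4k : (2:ℝ) ^ (2 * k) = 4 ^ k := by
    rw [show (4:ℝ) = 2 ^ 2 by norm_num, ← pow_mul]
  rw [Finset.sum_range_succ']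
  have hA : (∑ i ∈ Finset.range k,
      ((Nat.choose (2 * k) (2 * (i + 1)) : ℝ) * (sigGam (i + 1) * ε ^ (2 * (i + 1)))) *
        ∑ j ∈ Finset.range (2 * k - 2 * (i + 1) + 1),
          ((Nat.choose (2 * k - 2 * (i + 1)) j : ℝ) / 2 ^ (2 * k - 2 * (i + 1))) *
            (Mc j * Mc (2 * k - 2 * (i + 1) - j)))
      = ∑ l ∈ Finset.range k, ∑ j ∈ Finset.range (2 * l + 1),
          sigGam (k - l) * ε ^ (2 * (k - l)) * (1 / 4 ^ l) *
            (Nat.choose (2 * k) (2 * l) : ℝ) * (Nat.choose (2 * l) j : ℝ) *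
            Mc (2 * l - j) * Mc j := by
    rw [← Finset.sum_range_reflect]
    refine Finset.sum_congr rfl fun l hl => ?_
    have hlk : l < k := Finset.mem_range.1 hl
    have hm : k - 1 - l + 1 = k - l := by omega
    rw [hm]
    have h2 : 2 * k - 2 * (k - l) = 2 * l := by omega
    rw [h2]
    have hch : (Nat.choose (2 * k) (2 * (k - l)) : ℝ) = (Nat.choose (2 * k) (2 * l) : ℝ) := by
      rw [show 2 * (k - l) = 2 * k - 2 * l by omega, Nat.choose_symm (by omega)]
    rw [hch, Finset.mul_sum]
    refine Finset.sum_congr rfl fun j hj => ?_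
    have h4 : (2:ℝ) ^ (2 * l) = 4 ^ l := by
      rw [show (4:ℝ) = 2 ^ 2 by norm_num, ← pow_mul]
    rw [h4]
    ring
  have hB : ((Nat.choose (2 * k) (2 * 0) : ℝ) * (sigGam 0 * ε ^ (2 * 0))) *
      (∑ j ∈ Finset.range (2 * k - 2 * 0 + 1),
          ((Nat.choose (2 * k - 2 * 0) j : ℝ) / 2 ^ (2 * k - 2 * 0)) *
            (Mc j * Mc (2 * k - 2 * 0 - j)))
      = (2 / 4 ^ k) * Mc (2 * k)
        + ∑ j ∈ Finset.Icc 2 (2 * k - 2),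
            (1 / 4 ^ k) * (Nat.choose (2 * k) j : ℝ) * Mc (2 * k - j) * Mc j := by
    simp only [Nat.mul_zero, Nat.sub_zero, pow_zero, Nat.choose_zero_right, Nat.cast_one,
      sigGam_zero, one_mul, mul_one]
    have h0mem : (0:ℕ) ∈ Finset.range (2 * k + 1) := by simp
    rw [← Finset.add_sum_erase _ _ h0mem]
    have h2kmem : 2 * k ∈ (Finset.range (2 * k + 1)).erase 0 := by
      simp only [Finset.mem_erase, Finset.mem_range]
      omega
    rw [← Finset.add_sum_erase _ _ h2kmem]
    have hIcc : (∑ j ∈ ((Finset.range (2 * k + 1)).erase 0).erase (2 * k),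
        ((Nat.choose (2 * k) j : ℝ) / 2 ^ (2 * k)) * (Mc j * Mc (2 * k - j)))
        = ∑ j ∈ Finset.Icc 2 (2 * k - 2),
            ((Nat.choose (2 * k) j : ℝ) / 2 ^ (2 * k)) * (Mc j * Mc (2 * k - j)) := by
      refine (Finset.sum_subset ?_ ?_).symm
      · intro j hj
        simp only [Finset.mem_Icc] at hj
        simp only [Finset.mem_erase, Finset.mem_range]
        omega
      · intro j hj hnj
        simp only [Finset.mem_erase, Finset.mem_range] at hj
        simp only [Finset.mem_Icc, not_and, not_le] at hnj
        have : j = 1 ∨ j = 2 * k - 1 := by omega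
        rcases this with rfl | rfl
        · rw [hMc1]; ring
        · rw [show 2 * k - (2 * k - 1) = 1 by omega, hMc1]; ring
    rw [hIcc]
    rw [Nat.sub_self, Nat.choose_self, Nat.choose_zero_right, hMc0]
    push_cast
    rw [h4k]
    have hIcc2 : (∑ j ∈ Finset.Icc 2 (2 * k - 2),
        ((Nat.choose (2 * k) j : ℝ) / 4 ^ k) * (Mc j * Mc (2 * k - j)))
        = ∑ j ∈ Finset.Icc 2 (2 * k - 2),
            (1 / 4 ^ k) * (Nat.choose (2 * k) j : ℝ) * Mc (2 * k - j) * Mc j :=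
      Finset.sum_congr rfl fun j _ => by ring
    rw [hIcc2, Nat.sub_zero]
    ring
  rw [hA, hB]
  ring
end

section
/- (Lemma 3.1(a), quasi-static tracking for logistic dynamics) Let ε ∈ (0,1) and let y_ε solve ε² y_ε'(t) = α_ε(t) (H_ε(t) − y_ε(t)) y_ε(t) with y_ε(0) = H_ε(0) + O(ε), where α_ε, H_ε : [0,∞) → ℝ are C¹ and satisfy 0 < α_L ≤ α_ε(t) ≤ α_U, 0 < H_L ≤ H_ε(t) ≤ H_U, |H_ε'(t)| ≤ C_H. Then there exists a constant C, depending only on C_H, H_L, H_U, α_L, α_U and the implicit constant in the initial condition, such that |y_ε(t) − H_ε(t)| ≤ C ε for all t ≥ 0 and all sufficiently small ε. -/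
open Real

open Filter Topology in
/-- Barrier lemma: if `f 0 < c` and whenever `f` touches `c` (at `t ≥ 0`) its derivative is
strictly negative, then `f` stays below `c` on `[0, ∞)`. -/
lemma stmt9_barrier {f f' : ℝ → ℝ} {c : ℝ}
    (hd : ∀ t ≥ (0:ℝ), HasDerivAt f (f' t) t)
    (h0 : f 0 < c)
    (hc : ∀ t ≥ (0:ℝ), f t = c → f' t < 0) :
    ∀ t ≥ (0:ℝ), f t < c := by
  by_contra hcon
  push_neg at hcon
  obtain ⟨t₂, ht₂0, ht₂⟩ := hcon
  set S : Set ℝ := {t | 0 ≤ t ∧ c ≤ f t} with hS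
  have hne : S.Nonempty := ⟨t₂, ht₂0, ht₂⟩
  have hbdd : BddBelow S := ⟨0, fun s hs => hs.1⟩
  set t₁ := sInf S with ht₁def
  have ht₁0 : 0 ≤ t₁ := le_csInf hne fun s hs => hs.1
  have hlt : ∀ t, 0 ≤ t → t < t₁ → f t < c := by
    intro t ht0 htlt
    by_contra h
    push_neg at h
    exact absurd (csInf_le hbdd ⟨ht0, h⟩) (not_le.2 htlt)
  have hcont : ContinuousAt f t₁ := (hd t₁ ht₁0).continuousAt
  have hfc : c ≤ f t₁ := by
    by_contra h
    push_neg at h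
    obtain ⟨δ, hδ, hδ'⟩ := Metric.continuousAt_iff.1 hcont (c - f t₁) (by linarith)
    obtain ⟨s, hsS, hs⟩ := (csInf_lt_iff hbdd hne).1 (by linarith : t₁ < t₁ + δ)
    have h1 : t₁ ≤ s := csInf_le hbdd hsS
    have hdist : dist s t₁ < δ := by
      rw [Real.dist_eq, abs_of_nonneg (by linarith)]; linarith
    have h2 := hδ' hdist
    rw [Real.dist_eq] at h2
    have h3 := abs_lt.1 h2
    have := hsS.2
    linarith [h3.1, h3.2]
  have ht₁ne : t₁ ≠ 0 := by
    intro h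
    rw [h] at hfc
    linarith
  have ht₁pos : 0 < t₁ := ht₁0.lt_of_ne (Ne.symm ht₁ne)
  have hfc' : f t₁ ≤ c := by
    by_contra h
    push_neg at h
    obtain ⟨δ, hδ, hδ'⟩ := Metric.continuousAt_iff.1 hcont (f t₁ - c) (by linarith)
    set t := max (t₁ - δ/2) (t₁/2) with htdef
    have htlt : t < t₁ := max_lt (by linarith) (by linarith)
    have ht0 : 0 ≤ t := le_trans (by linarith) (le_max_right _ _)
    have hdist : dist t t₁ < δ := by
      rw [Real.dist_eq, abs_of_nonpos (by linarith)]
      have := le_max_left (t₁ - δ/2) (t₁/2)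
      linarith
    have h2 := hδ' hdist
    rw [Real.dist_eq] at h2
    have h3 := abs_lt.1 h2
    have := hlt t ht0 htlt
    linarith [h3.1, h3.2]
  have hfeq : f t₁ = c := le_antisymm hfc' hfc
  have hderiv : f' t₁ < 0 := hc t₁ ht₁0 hfeq
  have hslope : Tendsto (slope f t₁) (𝓝[≠] t₁) (𝓝 (f' t₁)) :=
    hasDerivAt_iff_tendsto_slope.1 (hd t₁ ht₁0)
  have hmono : 𝓝[<] t₁ ≤ 𝓝[≠] t₁ :=
    nhdsWithin_mono t₁ fun x (hx : x ∈ Set.Iio t₁) => (ne_of_lt hx : x ≠ t₁)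
  have hev1 : ∀ᶠ t in 𝓝[<] t₁, slope f t₁ t < 0 :=
    (hslope.mono_left hmono).eventually (eventually_lt_nhds hderiv)
  have hev2 : ∀ᶠ t in 𝓝[<] t₁, t ∈ Set.Ioo (t₁/2) t₁ :=
    eventually_of_mem (Ioo_mem_nhdsLT_of_mem ⟨by linarith, le_rfl⟩) fun x hx => hx
  obtain ⟨t, hts, htI⟩ := (hev1.and hev2).exists
  rw [slope_def_field] at hts
  have hden : t - t₁ < 0 := by linarith [htI.2]
  have hnum : 0 < f t - f t₁ := by
    rcases div_neg_iff.1 hts with ⟨h1, h2⟩ | ⟨h1, h2⟩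
    · exact h1
    · linarith
  have ht0 : 0 ≤ t := by linarith [htI.1]
  have := hlt t ht0 htI.2
  linarith

set_option maxHeartbeats 1000000 in
theorem stmt9 (α_L α_U H_L H_U C_H K₀ : ℝ)
    (hαL : 0 < α_L) (hαLU : α_L ≤ α_U) (hHL : 0 < H_L) (hHLU : H_L ≤ H_U)
    (hCH : 0 ≤ C_H) (hK₀ : 0 ≤ K₀) :
    ∃ C > (0:ℝ), ∃ ε₀ > (0:ℝ), ∀ ε : ℝ, 0 < ε → ε < ε₀ →
      ∀ y α H : ℝ → ℝ,
        ContDiff ℝ 1 α → ContDiff ℝ 1 H →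
        (∀ t ≥ (0:ℝ), α_L ≤ α t ∧ α t ≤ α_U) →
        (∀ t ≥ (0:ℝ), H_L ≤ H t ∧ H t ≤ H_U) →
        (∀ t ≥ (0:ℝ), |deriv H t| ≤ C_H) →
        (∀ t ≥ (0:ℝ), HasDerivAt y (ε ^ (-2 : ℤ) * (α t * (H t - y t) * y t)) t) →
        |y 0 - H 0| ≤ K₀ * ε →
        ∀ t ≥ (0:ℝ), |y t - H t| ≤ C * ε := by
  have hprod : 0 < α_L * H_L := mul_pos hαL hHL
  obtain ⟨C, hCdef⟩ : ∃ C : ℝ, C = 2*(C_H+1)/(α_L*H_L) + K₀ + 1 := ⟨_, rfl⟩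
  have hdivnn : 0 ≤ 2*(C_H+1)/(α_L*H_L) := div_nonneg (by linarith) hprod.le
  have hC : 0 < C := by rw [hCdef]; linarith
  have hkey : 2*(C_H+1) ≤ C*(α_L*H_L) := by
    have h1 : 2*(C_H+1)/(α_L*H_L) ≤ C := by rw [hCdef]; linarith
    exact (div_le_iff₀ hprod).1 h1
  have hCK : K₀ < C := by rw [hCdef]; linarith
  refine ⟨C, hC, min 1 (H_L/(2*C)), lt_min one_pos (by positivity), ?_⟩
  intro ε hε hεlt y α H hα hH hαb hHb hH' hy h0
  have hε1 : ε < 1 := lt_of_lt_of_le hεlt (min_le_left _ _)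
  have hεH : ε < H_L/(2*C) := lt_of_lt_of_le hεlt (min_le_right _ _)
  have hCε : C * ε < H_L/2 := by
    have h1 : ε * (2*C) < H_L := (lt_div_iff₀ (by positivity : (0:ℝ) < 2*C)).1 hεH
    linarith [h1]
  have hεinv : 1 < ε⁻¹ := (one_lt_inv₀ hε).2 hε1
  have hzpow : ε ^ (-2:ℤ) = ε⁻¹ * ε⁻¹ := by rw [zpow_neg, zpow_two, mul_inv]
  have hεε : ε⁻¹ * ε = 1 := inv_mul_cancel₀ (ne_of_gt hε)
  have hCεpos : 0 < C * ε := mul_pos hC hε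
  have hinit : K₀ * ε < C * ε := mul_lt_mul_of_pos_right hCK hε
  -- Upper barrier: y - H < C ε
  have hup : ∀ t ≥ (0:ℝ), y t - H t < C * ε := by
    apply stmt9_barrier
      (f' := fun t => ε ^ (-2:ℤ) * (α t * (H t - y t) * y t) - deriv H t)
    · intro t ht
      exact (hy t ht).sub ((hH.differentiable one_ne_zero t).hasDerivAt)
    · have h1 : y 0 - H 0 ≤ |y 0 - H 0| := le_abs_self _
      linarith
    · intro t ht heq
      have hH'b := abs_le.1 (hH' t ht)
      obtain ⟨hα1, hα2⟩ := hαb t ht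
      obtain ⟨hH1, hH2⟩ := hHb t ht
      have hHy : H t - y t = -(C*ε) := by linarith
      have hypos : H_L ≤ y t := by linarith
      simp only [hHy, hzpow]
      have e1 : ε⁻¹*ε⁻¹ * (α t * (-(C*ε)) * y t) = -(ε⁻¹ * (α t * C * y t)) := by
        field_simp
      rw [e1]
      have e2 : α_L * H_L ≤ α t * y t :=
        mul_le_mul hα1 hypos hHL.le (le_trans hαL.le hα1)
      have h4 := mul_le_mul_of_nonneg_left e2 hC.le
      have e3 := mul_le_mul_of_nonneg_left h4 (inv_nonneg.2 hε.le)
      have hXpos : 0 < C*(α_L*H_L) := by linarith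
      have h5 : C*(α_L*H_L) < ε⁻¹*(C*(α_L*H_L)) :=
        (lt_mul_iff_one_lt_left hXpos).2 hεinv
      linarith [hH'b.1, e3, h5, hkey]
  -- Lower barrier: H - y < C ε
  have hlow : ∀ t ≥ (0:ℝ), H t - y t < C * ε := by
    apply stmt9_barrier
      (f' := fun t => deriv H t - ε ^ (-2:ℤ) * (α t * (H t - y t) * y t))
    · intro t ht
      exact ((hH.differentiable one_ne_zero t).hasDerivAt).sub (hy t ht)
    · have h1 : -(y 0 - H 0) ≤ |y 0 - H 0| := neg_le_abs _
      linarith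
    · intro t ht heq
      have hH'b := abs_le.1 (hH' t ht)
      obtain ⟨hα1, hα2⟩ := hαb t ht
      obtain ⟨hH1, hH2⟩ := hHb t ht
      have hypos : H_L/2 ≤ y t := by linarith
      simp only [heq, hzpow]
      have e1 : ε⁻¹*ε⁻¹ * (α t * (C*ε) * y t) = ε⁻¹ * (α t * C * y t) := by
        field_simp
      rw [e1]
      have e2 : α_L * (H_L/2) ≤ α t * y t :=
        mul_le_mul hα1 hypos (by linarith) (le_trans hαL.le hα1)
      have h4 := mul_le_mul_of_nonneg_left e2 hC.le
      have e3 := mul_le_mul_of_nonneg_left h4 (inv_nonneg.2 hε.le)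
      have hXpos : 0 < C*(α_L*(H_L/2)) := mul_pos hC (mul_pos hαL (by linarith))
      have h5 : C*(α_L*(H_L/2)) < ε⁻¹*(C*(α_L*(H_L/2))) :=
        (lt_mul_iff_one_lt_left hXpos).2 hεinv
      linarith [hH'b.2, e3, h5, hkey]
  intro t ht
  exact le_of_lt (abs_sub_lt_iff.2 ⟨hup t ht, hlow t ht⟩)
end
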